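/- arXiv:2405.04202 — 2 statements merged into one kernel-verified Lean document; each statement's English description precedes it below -/
import Mathlib

section
/- Let X be a Banach space over 𝔽, where 𝔽 = ℝ or ℂ. For a nonempty closed convex bounded set U ⊆ X define p_U(x*) = inf { Re x*(x) : x ∈ U } for x* ∈ X*, and for a weak* upper semicontinuous superlinear functional p : X* → ℝ define U_p = { x ∈ X : Re x*(x) ≥ p(x*) for every x* ∈ X* }. Then: (a) p_U is weak* upper semicontinuous and superlinear; (b) U_p is nonempty, closed, convex and bounded; (c) U_{p_U} = U for every nonempty closed convex bounded U ⊆ X; (d) p_{U_p} = p for every weak* upper semicontinuous superlinear p : X* → ℝ. -/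
set_option maxHeartbeats 1000000


noncomputable section

variable (𝕜 X : Type*) [RCLike 𝕜] [NormedAddCommGroup X] [NormedSpace 𝕜 X]

/-- A set is (really) convex: convex combinations with real coefficients stay in the set. -/
def RealConvex (U : Set X) : Prop :=
  ∀ x ∈ U, ∀ y ∈ U, ∀ a b : ℝ, 0 ≤ a → 0 ≤ b → a + b = 1 →
    ((a : 𝕜) • x + (b : 𝕜) • y) ∈ U

/-- `p_U(x*) = inf { Re x*(x) : x ∈ U }`. -/
def pU (U : Set X) (φ : WeakDual 𝕜 X) : ℝ :=
  sInf ((fun x => RCLike.re (φ x)) '' U)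

/-- A real-valued functional on the dual is superlinear if it is positively homogeneous
(for real scalars) and superadditive. -/
def Superlinear (p : WeakDual 𝕜 X → ℝ) : Prop :=
  (∀ c : ℝ, 0 ≤ c → ∀ φ : WeakDual 𝕜 X, p ((c : 𝕜) • φ) = c * p φ) ∧
  (∀ φ ψ : WeakDual 𝕜 X, p φ + p ψ ≤ p (φ + ψ))

/-- `U_p = { x ∈ X : Re x*(x) ≥ p(x*) for every x* ∈ X* }`. -/
def Uset (p : WeakDual 𝕜 X → ℝ) : Set X :=
  {x : X | ∀ φ : WeakDual 𝕜 X, p φ ≤ RCLike.re (φ x)}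

open RCLike Topology Filter Set Pointwise

section Aux

lemma wd_real_smul (r : ℝ) (φ : WeakDual 𝕜 X) : ((r : 𝕜) • φ) = r • φ := by
  apply DFunLike.ext
  intro x
  show (r : 𝕜) • (φ x) = r • (φ x)
  rw [smul_eq_mul, real_smul_eq_coe_mul]

instance : LocallyConvexSpace ℝ (WeakDual 𝕜 X) := WeakBilin.locallyConvexSpace

lemma norm_le_abs_re_add_abs_im (z : 𝕜) : ‖z‖ ≤ |re z| + |im z| := by
  have h1 : ‖z‖ * ‖z‖ = re z * re z + im z * im z := by
    rw [RCLike.mul_self_norm, RCLike.normSq_apply]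
  nlinarith [abs_mul_abs_self (re z), abs_mul_abs_self (im z), abs_nonneg (re z),
    abs_nonneg (im z), mul_nonneg (abs_nonneg (re z)) (abs_nonneg (im z)), norm_nonneg z,
    abs_re_le_norm z, abs_im_le_norm z]

/-- Every weak-* continuous real-linear functional on the dual is given by (the real part of)
evaluation at a point of `X`. -/
theorem wd_dual_repr (g : WeakDual 𝕜 X →L[ℝ] ℝ) :
    ∃ x : X, ∀ φ : WeakDual 𝕜 X, g φ = re (φ x) := by
  classical
  have hb : (𝓝 (0 : WeakDual 𝕜 X)).HasBasis
      (topDualPairing 𝕜 X).toSeminormFamily.basisSets _root_.id :=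
    LinearMap.hasBasis_weakBilin (topDualPairing 𝕜 X)
  have hcont : g ⁻¹' Metric.ball (0 : ℝ) 1 ∈ 𝓝 (0 : WeakDual 𝕜 X) := by
    have h1 : Metric.ball (0 : ℝ) 1 ∈ 𝓝 (g 0) := by
      rw [map_zero]; exact Metric.ball_mem_nhds _ one_pos
    exact g.continuous.continuousAt.preimage_mem_nhds h1
  obtain ⟨U, hU, hUsub⟩ := hb.mem_iff.mp hcont
  obtain ⟨s, r, hr, rfl⟩ := (SeminormFamily.basisSets_iff _).mp hU
  have hker : ∀ φ : WeakDual 𝕜 X, (∀ y ∈ s, φ y = 0) → g φ = 0 := by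
    intro φ hφ
    by_contra hne
    have habs : 0 < |g φ| := abs_pos.mpr hne
    set t : ℝ := 2 / |g φ| with ht
    have hmem : (t • φ) ∈ (s.sup (topDualPairing 𝕜 X).toSeminormFamily).ball 0 r := by
      refine (Seminorm.mem_ball_zero _).mpr ?_
      apply Seminorm.finset_sup_apply_lt hr
      intro y hy
      show ‖t • (φ y)‖ < r
      rw [hφ y hy, smul_zero, norm_zero]
      exact hr
    have h2 := hUsub hmem
    simp only [Set.mem_preimage, Metric.mem_ball, Real.dist_eq, sub_zero] at h2
    rw [map_smul, smul_eq_mul, abs_mul, abs_of_pos (by positivity : (0:ℝ) < t)] at h2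
    rw [ht, div_mul_cancel₀ _ (ne_of_gt habs)] at h2
    linarith
  let Lre : X → (WeakDual 𝕜 X →ₗ[ℝ] ℝ) := fun y =>
    { toFun := fun φ => re (φ y)
      map_add' := fun φ ψ => by
        have e : (φ + ψ : WeakDual 𝕜 X) y = φ y + ψ y := rfl
        simp [e]
      map_smul' := fun c φ => by
        have e : (c • φ : WeakDual 𝕜 X) y = c • (φ y) := rfl
        simp [e, smul_re] }
  let Lim : X → (WeakDual 𝕜 X →ₗ[ℝ] ℝ) := fun y =>
    { toFun := fun φ => im (φ y)
      map_add' := fun φ ψ => by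
        have e : (φ + ψ : WeakDual 𝕜 X) y = φ y + ψ y := rfl
        simp [e]
      map_smul' := fun c φ => by
        have e : (c • φ : WeakDual 𝕜 X) y = c • (φ y) := rfl
        simp [e, smul_im] }
  let L : (↥s × Bool) → (WeakDual 𝕜 X →ₗ[ℝ] ℝ) := fun iy =>
    if iy.2 then Lim iy.1 else Lre iy.1
  have hspan : (g : WeakDual 𝕜 X →ₗ[ℝ] ℝ) ∈ Submodule.span ℝ (Set.range L) := by
    apply mem_span_of_iInf_ker_le_ker
    intro φ hφ
    simp only [Submodule.mem_iInf, LinearMap.mem_ker] at hφ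
    rw [LinearMap.mem_ker]
    apply hker
    intro y hy
    have h1 := hφ (⟨y, hy⟩, false)
    have h2 := hφ (⟨y, hy⟩, true)
    simp only [L, Lre, Lim, if_false, if_true, Bool.false_eq_true, LinearMap.coe_mk,
      AddHom.coe_mk] at h1 h2
    exact RCLike.ext (by simpa using h1) (by simpa using h2)
  have key : ∀ f : WeakDual 𝕜 X →ₗ[ℝ] ℝ, f ∈ Submodule.span ℝ (Set.range L) →
      ∃ x : X, ∀ φ : WeakDual 𝕜 X, f φ = re (φ x) := by
    intro f hf
    induction hf using Submodule.span_induction with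
    | mem f hf =>
        obtain ⟨⟨⟨y, hy⟩, b⟩, rfl⟩ := hf
        cases b with
        | false => exact ⟨y, fun φ => by simp [L, Lre]⟩
        | true =>
            refine ⟨(-(I : 𝕜)) • y, fun φ => ?_⟩
            have e : φ ((-(I : 𝕜)) • y) = (-(I : 𝕜)) * φ y := by
              rw [map_smul, smul_eq_mul]
            simp only [L, Lim, if_true, LinearMap.coe_mk, AddHom.coe_mk, e, neg_mul, map_neg,
              I_mul_re, neg_neg]
    | zero => exact ⟨0, fun φ => by simp⟩
    | add f1 f2 _ _ h1 h2 =>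
        obtain ⟨x1, hx1⟩ := h1
        obtain ⟨x2, hx2⟩ := h2
        refine ⟨x1 + x2, fun φ => ?_⟩
        rw [LinearMap.add_apply, hx1 φ, hx2 φ, map_add, map_add]
    | smul c f _ h =>
        obtain ⟨x, hx⟩ := h
        refine ⟨(c : 𝕜) • x, fun φ => ?_⟩
        rw [LinearMap.smul_apply, hx φ, map_smul]
        rw [smul_eq_mul (a := (c : 𝕜)), re_ofReal_mul, smul_eq_mul]
  obtain ⟨x, hx⟩ := key _ hspan
  exact ⟨x, fun φ => hx φ⟩

variable {𝕜 X}

lemma superlin_zero {p : WeakDual 𝕜 X → ℝ} (h : Superlinear 𝕜 X p) : p 0 = 0 := by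
  have := h.1 0 le_rfl 0
  simpa using this

lemma pU_bdd {U : Set X} (hb : Bornology.IsBounded U) (φ : WeakDual 𝕜 X) :
    BddBelow ((fun x => re (φ x)) '' U) := by
  obtain ⟨M, hM⟩ := isBounded_iff_forall_norm_le.mp hb
  refine ⟨-(‖WeakDual.toStrongDual φ‖ * M), ?_⟩
  rintro b ⟨x, hx, rfl⟩
  have h1 : ‖φ x‖ ≤ ‖WeakDual.toStrongDual φ‖ * M := by
    calc ‖φ x‖ = ‖WeakDual.toStrongDual φ x‖ := rfl
    _ ≤ ‖WeakDual.toStrongDual φ‖ * ‖x‖ := ContinuousLinearMap.le_opNorm _ _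
    _ ≤ ‖WeakDual.toStrongDual φ‖ * M :=
        mul_le_mul_of_nonneg_left (hM x hx) (norm_nonneg _)
  have h2 := abs_re_le_norm (φ x)
  have h3 := neg_abs_le (re (φ x))
  simp only
  linarith

/-- The key separation argument: any point strictly above the hypograph of `p` can be
separated, producing an element of `Uset p`. -/
theorem key_sep {p : WeakDual 𝕜 X → ℝ} (hp : UpperSemicontinuous p) (hsl : Superlinear 𝕜 X p)
    (φ₀ : WeakDual 𝕜 X) (s' : ℝ) (h : p φ₀ < s') :
    ∃ x ∈ Uset 𝕜 X p, re (φ₀ x) < s' := by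
  have hzero : p 0 = 0 := superlin_zero hsl
  have hhom : ∀ r : ℝ, 0 ≤ r → ∀ φ : WeakDual 𝕜 X, p (r • φ) = r * p φ := by
    intro r hr φ
    rw [← wd_real_smul]
    exact hsl.1 r hr φ
  set H : Set (WeakDual 𝕜 X × ℝ) := {q | q.2 ≤ p q.1} with hH
  have hHcl : IsClosed H := by
    rw [← isOpen_compl_iff, isOpen_iff_mem_nhds]
    rintro ⟨φ, t⟩ hq
    simp only [H, mem_compl_iff, mem_setOf_eq, not_le] at hq
    obtain ⟨c, hc1, hc2⟩ := exists_between hq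
    have h1 : {ψ : WeakDual 𝕜 X | p ψ < c} ∈ 𝓝 φ := hp φ c hc1
    have h2 : Set.Ioi c ∈ 𝓝 t := Ioi_mem_nhds hc2
    rw [nhds_prod_eq]
    apply Filter.mem_of_superset (Filter.prod_mem_prod h1 h2)
    rintro ⟨ψ, u⟩ ⟨hψ, hu⟩
    simp only [H, mem_compl_iff, mem_setOf_eq, not_le]
    exact lt_trans hψ hu
  have hHconv : Convex ℝ H := by
    rintro ⟨φ1, t1⟩ h1 ⟨φ2, t2⟩ h2 a b ha hb hab
    simp only [H, mem_setOf_eq] at h1 h2 ⊢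
    have e1 : (a • (⟨φ1, t1⟩ : WeakDual 𝕜 X × ℝ) + b • ⟨φ2, t2⟩).1 = a • φ1 + b • φ2 := rfl
    have e2 : (a • (⟨φ1, t1⟩ : WeakDual 𝕜 X × ℝ) + b • ⟨φ2, t2⟩).2 = a * t1 + b * t2 := rfl
    rw [e1, e2]
    calc a * t1 + b * t2 ≤ a * p φ1 + b * p φ2 :=
          add_le_add (mul_le_mul_of_nonneg_left h1 ha) (mul_le_mul_of_nonneg_left h2 hb)
    _ = p (a • φ1) + p (b • φ2) := by rw [hhom a ha, hhom b hb]
    _ ≤ p (a • φ1 + b • φ2) := hsl.2 _ _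
  have hq0 : ((φ₀, s') : WeakDual 𝕜 X × ℝ) ∉ H := by
    simp only [H, mem_setOf_eq, not_le]
    exact h
  obtain ⟨f, u, hfH, hfq⟩ := @geometric_hahn_banach_closed_point (WeakDual 𝕜 X × ℝ) _ _ _ H
    (φ₀, s') inferInstance inferInstance inferInstance hHconv hHcl hq0
  set c : ℝ := f ((0 : WeakDual 𝕜 X), (1 : ℝ)) with hc
  have hsplit : ∀ φ : WeakDual 𝕜 X, ∀ t : ℝ, f (φ, t) = f (φ, 0) + t * c := by
    intro φ t
    have e : ((φ, t) : WeakDual 𝕜 X × ℝ) = (φ, (0 : ℝ)) + t • ((0 : WeakDual 𝕜 X), (1 : ℝ)) := by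
      ext
      · show φ = φ + t • 0
        rw [smul_zero, add_zero]
      · show t = 0 + t * 1
        rw [mul_one, zero_add]
    rw [e, map_add, map_smul, smul_eq_mul]
  have h0H : (0 : WeakDual 𝕜 X × ℝ) ∈ H := by
    simp only [H, mem_setOf_eq]
    show (0 : ℝ) ≤ p 0
    rw [hzero]
  have hu0 : 0 < u := by
    have := hfH 0 h0H
    rwa [map_zero] at this
  have hcone : ∀ q ∈ H, f q ≤ 0 := by
    intro q hq
    by_contra hpos
    push_neg at hpos
    have hmem : ((u + 1) / f q) • q ∈ H := by
      simp only [H, mem_setOf_eq] at hq ⊢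
      have e1 : (((u + 1) / f q) • q).1 = ((u + 1) / f q) • q.1 := rfl
      have e2 : (((u + 1) / f q) • q).2 = ((u + 1) / f q) * q.2 := rfl
      rw [e1, e2]
      have hnn : 0 ≤ (u + 1) / f q := div_nonneg (by linarith) hpos.le
      calc ((u + 1) / f q) * q.2 ≤ ((u + 1) / f q) * p q.1 := mul_le_mul_of_nonneg_left hq hnn
      _ = p (((u + 1) / f q) • q.1) := (hhom _ hnn _).symm
    have h1 := hfH _ hmem
    rw [map_smul, smul_eq_mul, div_mul_cancel₀ _ (ne_of_gt hpos)] at h1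
    linarith
  have hgle : ∀ φ : WeakDual 𝕜 X, f (φ, 0) + p φ * c ≤ 0 := by
    intro φ
    have h1 : ((φ, p φ) : WeakDual 𝕜 X × ℝ) ∈ H := by
      simp only [H, mem_setOf_eq]
      exact le_refl _
    have := hcone _ h1
    rwa [hsplit] at this
  have hcnonneg : 0 ≤ c := by
    have h1 : (((0 : WeakDual 𝕜 X), (-1 : ℝ)) : WeakDual 𝕜 X × ℝ) ∈ H := by
      simp only [H, mem_setOf_eq]
      show (-1 : ℝ) ≤ p 0
      rw [hzero]; norm_num
    have h2 := hcone _ h1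
    rw [hsplit] at h2
    have h3 : f ((0 : WeakDual 𝕜 X), (0 : ℝ)) = 0 := by
      have e : (((0 : WeakDual 𝕜 X), (0 : ℝ)) : WeakDual 𝕜 X × ℝ) = 0 := rfl
      rw [e, map_zero]
    rw [h3] at h2
    linarith
  have hfq' : u < f (φ₀, 0) + s' * c := by rwa [hsplit] at hfq
  rcases eq_or_lt_of_le hcnonneg with hc0 | hcpos
  · exfalso
    have hgzero : ∀ φ : WeakDual 𝕜 X, f (φ, 0) ≤ 0 := by
      intro φ
      have := hgle φ
      rw [← hc0, mul_zero, add_zero] at this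
      exact this
    have hneg : ∀ φ : WeakDual 𝕜 X, f (φ, 0) = 0 := by
      intro φ
      have h1 := hgzero φ
      have h2 := hgzero (-φ)
      have e : ((-φ, (0 : ℝ)) : WeakDual 𝕜 X × ℝ) = -(φ, (0 : ℝ)) := by
        ext
        · rfl
        · show (0 : ℝ) = -0
          rw [neg_zero]
      rw [e, map_neg] at h2
      linarith
    rw [hneg φ₀, ← hc0, mul_zero, add_zero] at hfq'
    linarith
  · obtain ⟨x, hx⟩ := wd_dual_repr 𝕜 X (f.comp (ContinuousLinearMap.inl ℝ (WeakDual 𝕜 X) ℝ))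
    have hx' : ∀ φ : WeakDual 𝕜 X, f (φ, 0) = re (φ x) := fun φ => hx φ
    have hre : ∀ φ : WeakDual 𝕜 X, re (φ (((-c⁻¹ : ℝ) : 𝕜) • x)) = -c⁻¹ * re (φ x) := by
      intro φ
      rw [map_smul, smul_eq_mul, re_ofReal_mul]
    refine ⟨((-c⁻¹ : ℝ) : 𝕜) • x, ?_, ?_⟩
    · intro φ
      rw [hre φ, ← hx' φ]
      have h1 := hgle φ
      have h2 : p φ ≤ -f (φ, 0) / c := by
        rw [le_div_iff₀ hcpos]
        linarith
      calc p φ ≤ -f (φ, 0) / c := h2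
      _ = -c⁻¹ * f (φ, 0) := by ring
    · rw [hre φ₀, ← hx' φ₀]
      have h2 : -f (φ₀, 0) / c < s' := by
        rw [div_lt_iff₀ hcpos]
        linarith
      calc -c⁻¹ * f (φ₀, 0) = -f (φ₀, 0) / c := by ring
      _ < s' := h2

end Aux

/-- Batty's abstract correspondences: for a Banach space `X` over `𝕜 = ℝ, ℂ`:
(a) `p_U` is weak* upper semicontinuous and superlinear for each nonempty closed convex bounded
`U`; (b) `U_p` is nonempty closed convex bounded for each weak* upper semicontinuous superlinear
`p`; (c) `U_{p_U} = U`; (d) `p_{U_p} = p`. -/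
theorem batty_abstract_correspondence [CompleteSpace X] :
    (∀ U : Set X, U.Nonempty → IsClosed U → RealConvex 𝕜 X U → Bornology.IsBounded U →
      UpperSemicontinuous (pU 𝕜 X U) ∧ Superlinear 𝕜 X (pU 𝕜 X U)) ∧
    (∀ p : WeakDual 𝕜 X → ℝ, UpperSemicontinuous p → Superlinear 𝕜 X p →
      (Uset 𝕜 X p).Nonempty ∧ IsClosed (Uset 𝕜 X p) ∧ RealConvex 𝕜 X (Uset 𝕜 X p) ∧
        Bornology.IsBounded (Uset 𝕜 X p)) ∧
    (∀ U : Set X, U.Nonempty → IsClosed U → RealConvex 𝕜 X U → Bornology.IsBounded U →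
      Uset 𝕜 X (pU 𝕜 X U) = U) ∧
    (∀ p : WeakDual 𝕜 X → ℝ, UpperSemicontinuous p → Superlinear 𝕜 X p →
      pU 𝕜 X (Uset 𝕜 X p) = p) := by
  -- (b) nonempty
  have hbne : ∀ p : WeakDual 𝕜 X → ℝ, UpperSemicontinuous p → Superlinear 𝕜 X p →
      (Uset 𝕜 X p).Nonempty := by
    intro p hp hsl
    obtain ⟨x, hx, -⟩ := key_sep hp hsl 0 1 (by rw [superlin_zero hsl]; norm_num)
    exact ⟨x, hx⟩
  refine ⟨?_, ?_, ?_, ?_⟩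
  · -- (a)
    intro U hne hcl hcv hbdd
    constructor
    · -- upper semicontinuous
      intro φ₀ y hy
      obtain ⟨b, ⟨x, hxU, rfl⟩, hb⟩ := exists_lt_of_csInf_lt (hne.image _) hy
      have hcont : Continuous fun φ : WeakDual 𝕜 X => re (φ x) :=
        RCLike.continuous_re.comp (WeakDual.eval_continuous x)
      have hopen : IsOpen {φ : WeakDual 𝕜 X | re (φ x) < y} := isOpen_lt hcont continuous_const
      filter_upwards [hopen.mem_nhds hb] with φ hφ
      exact lt_of_le_of_lt (csInf_le (pU_bdd hbdd φ) ⟨x, hxU, rfl⟩) hφ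
    constructor
    · -- positive homogeneity
      intro c hc φ
      have himg : (fun x => re (((c : 𝕜) • φ) x)) '' U
          = c • ((fun x => re (φ x)) '' U) := by
        rw [← Set.image_smul, Set.image_image]
        apply Set.image_congr
        intro x _
        have e : ((c : 𝕜) • φ) x = (c : 𝕜) • (φ x) := rfl
        rw [e, smul_eq_mul (a := (c : 𝕜)), re_ofReal_mul, smul_eq_mul]
      show sInf ((fun x => re (((c : 𝕜) • φ) x)) '' U) = c * sInf ((fun x => re (φ x)) '' U)
      rw [himg, Real.sInf_smul_of_nonneg hc, smul_eq_mul]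
    · -- superadditive
      intro φ ψ
      apply le_csInf (hne.image _)
      rintro b ⟨x, hxU, rfl⟩
      have e : re ((φ + ψ) x) = re (φ x) + re (ψ x) := by
        have e1 : (φ + ψ) x = φ x + ψ x := rfl
        rw [e1, map_add]
      simp only [e]
      exact add_le_add (csInf_le (pU_bdd hbdd φ) ⟨x, hxU, rfl⟩)
        (csInf_le (pU_bdd hbdd ψ) ⟨x, hxU, rfl⟩)
  · -- (b)
    intro p hp hsl
    refine ⟨hbne p hp hsl, ?_, ?_, ?_⟩
    · -- closed
      have e : Uset 𝕜 X p = ⋂ φ : WeakDual 𝕜 X, {x : X | p φ ≤ re (φ x)} := by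
        ext x
        simp [Uset, Set.mem_iInter]
      rw [e]
      exact isClosed_iInter fun φ => isClosed_le continuous_const
        (RCLike.continuous_re.comp (map_continuous φ))
    · -- really convex
      intro x hx y hy a b ha hb hab φ
      have e : re (φ ((a : 𝕜) • x + (b : 𝕜) • y)) = a * re (φ x) + b * re (φ y) := by
        rw [map_add, map_smul, map_smul, smul_eq_mul, smul_eq_mul, map_add,
          re_ofReal_mul, re_ofReal_mul]
      rw [e]
      calc p φ = (a + b) * p φ := by rw [hab, one_mul]
      _ = a * p φ + b * p φ := by ring
      _ ≤ a * re (φ x) + b * re (φ y) :=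
          add_le_add (mul_le_mul_of_nonneg_left (hx φ) ha) (mul_le_mul_of_nonneg_left (hy φ) hb)
    · -- bounded
      rw [isBounded_iff_forall_norm_le]
      set T : Uset 𝕜 X p → (StrongDual 𝕜 X →L[𝕜] 𝕜) :=
        fun x => NormedSpace.inclusionInDoubleDual 𝕜 X x.1 with hT
      have hpt : ∀ ψ : StrongDual 𝕜 X, ∃ C, ∀ x : Uset 𝕜 X p, ‖T x ψ‖ ≤ C := by
        intro ψ
        set φ : WeakDual 𝕜 X := StrongDual.toWeakDual ψ with hφ
        refine ⟨(|p φ| + |p (-φ)|) + (|p ((I : 𝕜) • φ)| + |p (-((I : 𝕜) • φ))|), ?_⟩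
        rintro ⟨x, hx⟩
        have hre : ∀ χ : WeakDual 𝕜 X, |re (χ x)| ≤ |p χ| + |p (-χ)| := by
          intro χ
          have h1 : p χ ≤ re (χ x) := hx χ
          have h2 : p (-χ) ≤ re ((-χ) x) := hx (-χ)
          have e : re ((-χ) x) = -re (χ x) := by
            have e1 : (-χ) x = -(χ x) := rfl
            rw [e1, map_neg]
          rw [e] at h2
          rw [abs_le]
          constructor
          · linarith [neg_abs_le (p χ), abs_nonneg (p (-χ))]
          · linarith [neg_le_abs (p (-χ)), abs_nonneg (p χ)]
        have happ : T ⟨x, hx⟩ ψ = φ x := rfl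
        have hIφ : ((I : 𝕜) • φ) x = (I : 𝕜) * φ x := rfl
        have hnorm : ‖φ x‖ ≤ |re (φ x)| + |re (((I : 𝕜) • φ) x)| := by
          rw [hIφ, I_mul_re, abs_neg]
          exact norm_le_abs_re_add_abs_im 𝕜 (φ x)
        rw [happ]
        calc ‖φ x‖ ≤ |re (φ x)| + |re (((I : 𝕜) • φ) x)| := hnorm
        _ ≤ (|p φ| + |p (-φ)|) + (|p ((I : 𝕜) • φ)| + |p (-((I : 𝕜) • φ))|) :=
            add_le_add (hre φ) (hre ((I : 𝕜) • φ))
      obtain ⟨C', hC'⟩ := banach_steinhaus hpt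
      refine ⟨C', fun x hx => ?_⟩
      have e : ‖T ⟨x, hx⟩‖ = ‖x‖ := (NormedSpace.inclusionInDoubleDualLi 𝕜 (E := X)).norm_map x
      rw [← e]
      exact hC' ⟨x, hx⟩
  · -- (c)
    intro U hne hcl hcv hbdd
    refine Set.Subset.antisymm ?_ (fun x hx φ => csInf_le (pU_bdd hbdd φ) ⟨x, hx, rfl⟩)
    intro x hx
    by_contra hxU
    letI nX : NormedSpace ℝ X :=
      { toModule := Module.compHom X (algebraMap ℝ 𝕜 : ℝ →+* 𝕜)
        norm_smul_le := fun r y => by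
          show ‖algebraMap ℝ 𝕜 r • y‖ ≤ ‖r‖ * ‖y‖
          rw [norm_smul, norm_algebraMap'] }
    letI : Module ℝ X := nX.toModule
    haveI : IsScalarTower ℝ 𝕜 X := ⟨fun r k y => by
      show (r • k) • y = algebraMap ℝ 𝕜 r • (k • y)
      rw [Algebra.smul_def, mul_smul]⟩
    haveI : LocallyConvexSpace ℝ X := NormedSpace.toLocallyConvexSpace
    have hsmul : ∀ (r : ℝ) (y : X), r • y = (r : 𝕜) • y := fun r y => rfl
    have hconv : Convex ℝ U := by
      intro y hy z hz a b ha hb hab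
      rw [hsmul a y, hsmul b z]
      exact hcv y hy z hz a b ha hb hab
    obtain ⟨f, u, hfU, hfx⟩ := RCLike.geometric_hahn_banach_closed_point (𝕜 := 𝕜) hconv hcl hxU
    set φ : WeakDual 𝕜 X := StrongDual.toWeakDual (-f) with hφ
    have happ : ∀ y : X, φ y = -(f y) := fun y => rfl
    have h1 : -u ≤ pU 𝕜 X U φ := by
      apply le_csInf (hne.image _)
      rintro b ⟨a, ha, rfl⟩
      have e : re (φ a) = -re (f a) := by rw [happ, map_neg]
      simp only [e]
      linarith [hfU a ha]
    have h2 := hx φ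
    have h3 : re (φ x) = -re (f x) := by rw [happ, map_neg]
    rw [h3] at h2
    linarith
  · -- (d)
    intro p hp hsl
    funext φ₀
    have hbdd : BddBelow ((fun x => re (φ₀ x)) '' (Uset 𝕜 X p)) := by
      refine ⟨p φ₀, ?_⟩
      rintro b ⟨x, hx, rfl⟩
      exact hx φ₀
    apply le_antisymm
    · apply le_of_forall_pos_le_add
      intro ε hε
      obtain ⟨x, hxU, hlt⟩ := key_sep hp hsl φ₀ (p φ₀ + ε) (by linarith)
      exact (csInf_le hbdd ⟨x, hxU, rfl⟩).trans hlt.le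
    · apply le_csInf ((hbne p hp hsl).image _)
      rintro b ⟨x, hx, rfl⟩
      exact hx φ₀
end
end

section
/- Let K and L be compact Hausdorff spaces with L metrizable, let ν be a finite signed Radon measure on K × L, and let σ be the pushforward of the total variation measure |ν| under the first projection. Suppose (ν_t)_{t∈K} and (ν'_t)_{t∈K} are two indexed families of signed Radon measures on L such that ‖ν_t‖ = ‖ν'_t‖ = 1 for all t ∈ K, and such that for every continuous f : K × L → ℝ the functions t ↦ ∫_L f(t,z) dν_t(z) and t ↦ ∫_L f(t,z) dν'_t(z) are σ-measurable and ∫_{K×L} f dν = ∫_K ( ∫_L f(t,z) dν_t(z) ) dσ(t) = ∫_K ( ∫_L f(t,z) dν'_t(z) ) dσ(t). Then ν_t = ν'_t for σ-almost every t ∈ K. -/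
open MeasureTheory
open scoped ENNReal

noncomputable section

/-- The integral of a real function against a finite signed measure, via the Jordan
decomposition. -/
def signedIntegral {α : Type*} [MeasurableSpace α] (μ : SignedMeasure α) (g : α → ℝ) : ℝ :=
  ∫ z, g z ∂μ.toJordanDecomposition.posPart - ∫ z, g z ∂μ.toJordanDecomposition.negPart

/-- The Borel σ-algebra on a product of two topological spaces. -/
instance (priority := 1100) prodBorelMeasurableSpace (K L : Type*)
    [TopologicalSpace K] [TopologicalSpace L] : MeasurableSpace (K × L) := borel _

instance (K L : Type*) [TopologicalSpace K] [TopologicalSpace L] : BorelSpace (K × L) := ⟨rfl⟩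

/-! ### Auxiliary lemmas -/

lemma signedIntegral_const_mul {α : Type*} [MeasurableSpace α] (μ : SignedMeasure α) (c : ℝ)
    (g : α → ℝ) : signedIntegral μ (fun z => c * g z) = c * signedIntegral μ g := by
  simp only [signedIntegral, ← smul_eq_mul, integral_smul, smul_sub]

lemma abs_signedIntegral_le {α : Type*} [MeasurableSpace α] (μ : SignedMeasure α) (g : α → ℝ)
    (C : ℝ) (hg : ∀ z, |g z| ≤ C) :
    |signedIntegral μ g| ≤ C * (μ.totalVariation Set.univ).toReal := by
  have h1 : ‖∫ z, g z ∂μ.toJordanDecomposition.posPart‖ ≤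
      C * (μ.toJordanDecomposition.posPart Set.univ).toReal :=
    norm_integral_le_of_norm_le_const (ae_of_all _ fun z => by simpa using hg z)
  have h2 : ‖∫ z, g z ∂μ.toJordanDecomposition.negPart‖ ≤
      C * (μ.toJordanDecomposition.negPart Set.univ).toReal :=
    norm_integral_le_of_norm_le_const (ae_of_all _ fun z => by simpa using hg z)
  have htv : (μ.totalVariation Set.univ).toReal =
      (μ.toJordanDecomposition.posPart Set.univ).toReal +
      (μ.toJordanDecomposition.negPart Set.univ).toReal := by
    rw [SignedMeasure.totalVariation, Measure.add_apply,
      ENNReal.toReal_add (measure_ne_top _ _) (measure_ne_top _ _)]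
  have h3 := abs_sub (∫ z, g z ∂μ.toJordanDecomposition.posPart)
    (∫ z, g z ∂μ.toJordanDecomposition.negPart)
  rw [Real.norm_eq_abs] at h1 h2
  rw [signedIntegral]
  rw [htv]
  calc |∫ z, g z ∂μ.toJordanDecomposition.posPart - ∫ z, g z ∂μ.toJordanDecomposition.negPart|
      ≤ |∫ z, g z ∂μ.toJordanDecomposition.posPart| +
        |∫ z, g z ∂μ.toJordanDecomposition.negPart| := h3
    _ ≤ C * (μ.toJordanDecomposition.posPart Set.univ).toReal +
        C * (μ.toJordanDecomposition.negPart Set.univ).toReal := add_le_add h1 h2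
    _ = C * ((μ.toJordanDecomposition.posPart Set.univ).toReal +
        (μ.toJordanDecomposition.negPart Set.univ).toReal) := by ring

lemma continuous_signedIntegral {L : Type*} [TopologicalSpace L] [CompactSpace L]
    [MeasurableSpace L] [OpensMeasurableSpace L] (μ : SignedMeasure L) :
    Continuous fun g : C(L, ℝ) => signedIntegral μ (fun z => g z) := by
  have hint : ∀ (g : C(L, ℝ)) (τ : Measure L) [IsFiniteMeasure τ],
      Integrable (fun z => g z) τ := fun g τ _ =>
    g.continuous.integrable_of_hasCompactSupport (HasCompactSupport.of_compactSpace _)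
  refine LipschitzWith.continuous
    (K := (μ.totalVariation Set.univ).toReal.toNNReal) (LipschitzWith.of_dist_le_mul ?_)
  intro g₁ g₂
  rw [Real.dist_eq]
  have hsub : signedIntegral μ (fun z => g₁ z) - signedIntegral μ (fun z => g₂ z)
      = signedIntegral μ (fun z => g₁ z - g₂ z) := by
    rw [signedIntegral, signedIntegral, signedIntegral,
      integral_sub (hint g₁ _) (hint g₂ _), integral_sub (hint g₁ _) (hint g₂ _)]
    ring
  rw [hsub]
  have := abs_signedIntegral_le μ (fun z => g₁ z - g₂ z) (dist g₁ g₂) (fun z => by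
    have := ContinuousMap.dist_apply_le_dist (f := g₁) (g := g₂) z
    rwa [Real.dist_eq] at this)
  calc |signedIntegral μ fun z => g₁ z - g₂ z|
      ≤ dist g₁ g₂ * (μ.totalVariation Set.univ).toReal := this
    _ = ((μ.totalVariation Set.univ).toReal.toNNReal : ℝ) * dist g₁ g₂ := by
        rw [Real.coe_toNNReal _ ENNReal.toReal_nonneg]; ring

/-- If a bounded a.e.-measurable function integrates to zero against every continuous
function on a compact Hausdorff space with a regular finite measure, it vanishes a.e. -/
lemma ae_eq_zero_of_forall_contMul {K : Type*} [TopologicalSpace K] [CompactSpace K] [T2Space K]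
    [MeasurableSpace K] [BorelSpace K]
    (σ : Measure K) [IsFiniteMeasure σ] [σ.Regular]
    (h : K → ℝ) (hm : AEMeasurable h σ) (C : ℝ) (hC : 0 ≤ C) (hb : ∀ t, |h t| ≤ C)
    (hint : ∀ a : C(K, ℝ), ∫ t, a t * h t ∂σ = 0) :
    ∀ᵐ t ∂σ, h t = 0 := by
  have hsm : AEStronglyMeasurable h σ := hm.aestronglyMeasurable
  have hnormb : ∀ t, ‖h t‖ ≤ C := fun t => by simpa [Real.norm_eq_abs] using hb t
  have hInt : Integrable h σ :=
    Integrable.mono' (integrable_const C) hsm (ae_of_all _ hnormb)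
  have hInt2 : Integrable (fun t => h t * h t) σ := hInt.bdd_mul hsm (ae_of_all _ fun t => by exact hnormb t)
  have hmain : ∫ t, h t * h t ∂σ = 0 := by
    refine le_antisymm ?_ (integral_nonneg fun t => mul_self_nonneg _)
    refine le_of_forall_pos_le_add fun ε hε => ?_
    obtain ⟨a, -, haε, hacont, haInt⟩ :=
      hInt.exists_hasCompactSupport_integral_sub_le (ε := ε / (C + 1))
        (div_pos hε (by linarith))
    have hmul0 : ∫ t, a t * h t ∂σ = 0 := hint ⟨a, hacont⟩
    have hInt3 : Integrable (fun t => h t * (h t - a t)) σ :=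
      (hInt.sub haInt).bdd_mul hsm (ae_of_all _ fun t => by exact hnormb t)
    have hIntah : Integrable (fun t => a t * h t) σ :=
      hInt.bdd_mul hacont.aestronglyMeasurable
        (ae_of_all _ fun t => by exact ContinuousMap.norm_coe_le_norm (⟨a, hacont⟩ : C(K, ℝ)) t)
    have hsplit : ∫ t, h t * h t ∂σ = ∫ t, h t * (h t - a t) ∂σ := by
      rw [show (fun t => h t * (h t - a t)) = fun t => h t * h t - a t * h t from
        funext fun t => by ring, integral_sub hInt2 hIntah, hmul0, sub_zero]
    have hq : C / (C + 1) ≤ 1 :=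
      (div_le_one (show (0:ℝ) < C + 1 by linarith)).mpr (by linarith)
    calc ∫ t, h t * h t ∂σ = ∫ t, h t * (h t - a t) ∂σ := hsplit
      _ ≤ |∫ t, h t * (h t - a t) ∂σ| := le_abs_self _
      _ ≤ ∫ t, ‖h t * (h t - a t)‖ ∂σ := by
          rw [← Real.norm_eq_abs]; exact norm_integral_le_integral_norm _
      _ ≤ ∫ t, C * ‖h t - a t‖ ∂σ := by
          refine integral_mono hInt3.norm ((hInt.sub haInt).norm.const_mul C) fun t => ?_
          rw [norm_mul]
          exact mul_le_mul_of_nonneg_right (hnormb t) (norm_nonneg _)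
      _ = C * ∫ t, ‖h t - a t‖ ∂σ := by simp only [← smul_eq_mul, integral_smul]
      _ ≤ C * (ε / (C + 1)) := mul_le_mul_of_nonneg_left haε hC
      _ = (C / (C + 1)) * ε := by ring
      _ ≤ 1 * ε := mul_le_mul_of_nonneg_right hq hε.le
      _ = 0 + ε := by ring
  have h0 := (integral_eq_zero_iff_of_nonneg (fun t => mul_self_nonneg (h t)) hInt2).mp hmain
  filter_upwards [h0] with t ht
  exact mul_self_eq_zero.mp ht

lemma signedMeasure_apply_jordan {α : Type*} [MeasurableSpace α] (s : SignedMeasure α)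
    {i : Set α} (hi : MeasurableSet i) :
    s i = (s.toJordanDecomposition.posPart i).toReal -
      (s.toJordanDecomposition.negPart i).toReal := by
  conv_lhs => rw [← s.toSignedMeasure_toJordanDecomposition]
  exact Measure.toSignedMeasure_sub_apply hi

/-- Essential uniqueness of disintegration kernels when `L` is metrizable: if
two families `(ν_t)` and `(ν'_t)` of norm-one signed Radon measures on `L` both disintegrate the
finite signed Radon measure `ν` over the projection `σ` of `|ν|` to `K`, then `ν_t = ν'_t` for
`σ`-almost every `t ∈ K`. -/
theorem disintegration_kernel_ae_unique
    (K L : Type*) [TopologicalSpace K] [CompactSpace K] [T2Space K]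
    [TopologicalSpace L] [CompactSpace L] [T2Space L] [TopologicalSpace.MetrizableSpace L]
    [MeasurableSpace K] [BorelSpace K] [MeasurableSpace L] [BorelSpace L]
    (ν : SignedMeasure (K × L)) [ν.totalVariation.Regular]
    (σ : Measure K) (hσ : σ = ν.totalVariation.map Prod.fst)
    (νt νt' : K → SignedMeasure L)
    (hreg : ∀ t : K, (νt t).totalVariation.Regular)
    (hreg' : ∀ t : K, (νt' t).totalVariation.Regular)
    (hnorm : ∀ t : K, (νt t).totalVariation Set.univ = 1)
    (hnorm' : ∀ t : K, (νt' t).totalVariation Set.univ = 1)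
    (hdis : ∀ f : C(K × L, ℝ),
      NullMeasurable (fun t : K => signedIntegral (νt t) (fun z => f (t, z))) σ ∧
      signedIntegral ν (fun p => f p) = ∫ t, signedIntegral (νt t) (fun z => f (t, z)) ∂σ)
    (hdis' : ∀ f : C(K × L, ℝ),
      NullMeasurable (fun t : K => signedIntegral (νt' t) (fun z => f (t, z))) σ ∧
      signedIntegral ν (fun p => f p) = ∫ t, signedIntegral (νt' t) (fun z => f (t, z)) ∂σ) :
    ∀ᵐ t ∂σ, νt t = νt' t := by
  classical
  haveI : IsFiniteMeasure (ν.totalVariation) := by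
    rw [SignedMeasure.totalVariation]; infer_instance
  haveI : IsFiniteMeasure σ := by rw [hσ]; exact Measure.isFiniteMeasure_map _ _
  haveI : σ.Regular := by
    rw [hσ]
    haveI : (ν.totalVariation.map Prod.fst).InnerRegular :=
      Measure.InnerRegular.map_of_continuous continuous_fst
    haveI : IsFiniteMeasure (ν.totalVariation.map Prod.fst) :=
      Measure.isFiniteMeasure_map _ _
    infer_instance
  -- integrands against continuous functions
  have hIntc : ∀ (g : C(L, ℝ)) (τ : Measure L) [IsFiniteMeasure τ],
      Integrable (fun z => g z) τ := fun g τ _ =>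
    g.continuous.integrable_of_hasCompactSupport (HasCompactSupport.of_compactSpace _)
  -- bound for the kernel integrals
  have hHb : ∀ (g : C(L, ℝ)) (t : K), |signedIntegral (νt t) (fun z => g z)| ≤ ‖g‖ := by
    intro g t
    have := abs_signedIntegral_le (νt t) (fun z => g z) ‖g‖
      (fun z => by simpa [Real.norm_eq_abs] using g.norm_coe_le_norm z)
    rwa [hnorm t, ENNReal.toReal_one, mul_one] at this
  have hHb' : ∀ (g : C(L, ℝ)) (t : K), |signedIntegral (νt' t) (fun z => g z)| ≤ ‖g‖ := by
    intro g t
    have := abs_signedIntegral_le (νt' t) (fun z => g z) ‖g‖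
      (fun z => by simpa [Real.norm_eq_abs] using g.norm_coe_le_norm z)
    rwa [hnorm' t, ENNReal.toReal_one, mul_one] at this
  -- key: for each fixed continuous g on L, the two kernel integrals agree a.e.
  have key : ∀ g : C(L, ℝ), ∀ᵐ t ∂σ,
      signedIntegral (νt t) (fun z => g z) = signedIntegral (νt' t) (fun z => g z) := by
    intro g
    set H : K → ℝ := fun t => signedIntegral (νt t) (fun z => g z) with hHdef
    set H' : K → ℝ := fun t => signedIntegral (νt' t) (fun z => g z) with hH'def
    have hmH : AEMeasurable H σ :=
      ((hdis (g.comp ⟨Prod.snd, continuous_snd⟩)).1).aemeasurable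
    have hmH' : AEMeasurable H' σ :=
      ((hdis' (g.comp ⟨Prod.snd, continuous_snd⟩)).1).aemeasurable
    have hIntH : Integrable H σ :=
      Integrable.mono' (integrable_const ‖g‖) hmH.aestronglyMeasurable
        (ae_of_all _ fun t => by simpa [Real.norm_eq_abs, hHdef] using hHb g t)
    have hIntH' : Integrable H' σ :=
      Integrable.mono' (integrable_const ‖g‖) hmH'.aestronglyMeasurable
        (ae_of_all _ fun t => by simpa [Real.norm_eq_abs, hH'def] using hHb' g t)
    have hzero : ∀ a : C(K, ℝ), ∫ t, a t * (H t - H' t) ∂σ = 0 := by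
      intro a
      set fa : C(K × L, ℝ) :=
        ⟨fun p => a p.1 * g p.2,
          (a.continuous.comp continuous_fst).mul (g.continuous.comp continuous_snd)⟩ with hfa
      have e1 : ∀ t, signedIntegral (νt t) (fun z => fa (t, z)) = a t * H t := fun t =>
        signedIntegral_const_mul (νt t) (a t) (fun z => g z)
      have e1' : ∀ t, signedIntegral (νt' t) (fun z => fa (t, z)) = a t * H' t := fun t =>
        signedIntegral_const_mul (νt' t) (a t) (fun z => g z)
      have h1 := (hdis fa).2
      have h2 := (hdis' fa).2
      rw [integral_congr_ae (ae_of_all _ e1)] at h1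
      rw [integral_congr_ae (ae_of_all _ e1')] at h2
      have hIaH : Integrable (fun t => a t * H t) σ :=
        hIntH.bdd_mul a.continuous.aestronglyMeasurable
          (ae_of_all _ fun t => by exact a.norm_coe_le_norm t)
      have hIaH' : Integrable (fun t => a t * H' t) σ :=
        hIntH'.bdd_mul a.continuous.aestronglyMeasurable
          (ae_of_all _ fun t => by exact a.norm_coe_le_norm t)
      have : ∫ t, a t * H t ∂σ = ∫ t, a t * H' t ∂σ := by rw [← h1, ← h2]
      rw [show (fun t => a t * (H t - H' t)) = fun t => a t * H t - a t * H' t from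
        funext fun t => by ring, integral_sub hIaH hIaH', this, sub_self]
    have hae := ae_eq_zero_of_forall_contMul σ (fun t => H t - H' t) (hmH.sub hmH')
      (‖g‖ + ‖g‖) (by positivity)
      (fun t => (abs_sub _ _).trans (add_le_add (hHb g t) (hHb' g t))) hzero
    filter_upwards [hae] with t ht
    exact sub_eq_zero.mp ht
  -- combine over a countable dense set of test functions
  obtain ⟨D, hDc, hDd⟩ := TopologicalSpace.exists_countable_dense C(L, ℝ)
  have hae : ∀ᵐ t ∂σ, ∀ g ∈ D,
      signedIntegral (νt t) (fun z => g z) = signedIntegral (νt' t) (fun z => g z) :=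
    (ae_ball_iff hDc).mpr fun g _ => key g
  filter_upwards [hae] with t ht
  -- extend the equality to all continuous functions by density
  have hall : ∀ g : C(L, ℝ),
      signedIntegral (νt t) (fun z => g z) = signedIntegral (νt' t) (fun z => g z) := by
    have hclosed : IsClosed {g : C(L, ℝ) |
        signedIntegral (νt t) (fun z => g z) = signedIntegral (νt' t) (fun z => g z)} :=
      isClosed_eq (continuous_signedIntegral _) (continuous_signedIntegral _)
    intro g
    exact (hclosed.closure_subset_iff.mpr fun x hx => ht x hx) (hDd g)
  -- deduce equality of the signed measures
  set p₁ := (νt t).toJordanDecomposition.posPart with hp₁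
  set n₁ := (νt t).toJordanDecomposition.negPart with hn₁
  set p₂ := (νt' t).toJordanDecomposition.posPart with hp₂
  set n₂ := (νt' t).toJordanDecomposition.negPart with hn₂
  have hmeq : p₁ + n₂ = p₂ + n₁ := by
    apply ext_of_forall_lintegral_eq_of_IsFiniteMeasure
    intro f
    have gcont : Continuous fun z : L => (f z : ℝ) :=
      NNReal.continuous_coe.comp f.continuous
    set g : C(L, ℝ) := ⟨fun z => (f z : ℝ), gcont⟩ with hg
    have hgeq := hall g
    have hnn : ∀ (τ : Measure L), 0 ≤ ∫ z, (f z : ℝ) ∂τ :=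
      fun τ => integral_nonneg fun z => (f z).coe_nonneg
    rw [lintegral_add_measure, lintegral_add_measure,
      lintegral_coe_eq_integral _ (hIntc g p₁), lintegral_coe_eq_integral _ (hIntc g n₂),
      lintegral_coe_eq_integral _ (hIntc g p₂), lintegral_coe_eq_integral _ (hIntc g n₁),
      ← ENNReal.ofReal_add (hnn p₁) (hnn n₂), ← ENNReal.ofReal_add (hnn p₂) (hnn n₁)]
    congr 1
    have : (∫ z, (f z : ℝ) ∂p₁) - (∫ z, (f z : ℝ) ∂n₁)
        = (∫ z, (f z : ℝ) ∂p₂) - (∫ z, (f z : ℝ) ∂n₂) := hgeq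
    linarith
  refine VectorMeasure.ext fun s hs => ?_
  have h1 : p₁ s + n₂ s = p₂ s + n₁ s := by
    have := congrArg (fun μ : Measure L => μ s) hmeq
    simpa [Measure.add_apply] using this
  have h2 : (p₁ s).toReal + (n₂ s).toReal = (p₂ s).toReal + (n₁ s).toReal := by
    have := congrArg ENNReal.toReal h1
    rwa [ENNReal.toReal_add (measure_ne_top _ _) (measure_ne_top _ _),
      ENNReal.toReal_add (measure_ne_top _ _) (measure_ne_top _ _)] at this
  rw [signedMeasure_apply_jordan (νt t) hs, signedMeasure_apply_jordan (νt' t) hs]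
  rw [← hp₁, ← hn₁, ← hp₂, ← hn₂]
  linarith
end
end
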